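/- Let W be a complex vector space, N a positive integer, and i ∈ ℤ. Let a, b ∈ Ē(W) and c₀, c₁ ∈ F(W), and assume that a_k = 0 whenever k ≢ i (mod N) and that for all k ∈ ℤ with k ≡ i (mod N) and all l ∈ ℤ, the operator identity [a_k, b_l] = (c₀)_{k+l} + (k/N)·(c₁)_{k+l−N} holds in End(W). Then c₀, c₁ ∈ Ē(W), and for all k ≡ i (mod N) and all l ∈ ℤ one has [(ψ_R(a))_k, (ψ_R(b))_l] = (ψ_R(c₀))_{k+l} + (k/N)·(ψ_R(c₁))_{k+l−N}. -/
import Mathlib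


open scoped TensorProduct

noncomputable section
namespace Twisted

variable (N : ℕ) (W : Type) [AddCommGroup W] [Module ℂ W]

/-- The shift operator on `F(W) = (ℤ → End W)`, encoding multiplication by `x`:
`(x·a)_k = a_{k+N}`. -/
def shiftE : Module.End ℂ (ℤ → Module.End ℂ W) where
  toFun a := fun k => a (k + N)
  map_add' _ _ := rfl
  map_smul' _ _ := rfl

/-- The action of `ℂ[x]` on `F(W)`. -/
def polyAct (p : Polynomial ℂ) (a : ℤ → Module.End ℂ W) : ℤ → Module.End ℂ W :=
  Polynomial.aeval (shiftE N W) p a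

/-- Membership in `E(W)`. -/
def memE (a : ℤ → Module.End ℂ W) : Prop :=
  ∀ w : W, ∃ M : ℤ, ∀ k ≥ M, a k w = 0

/-- Membership in `Ē(W)`. -/
def memEbar (a : ℤ → Module.End ℂ W) : Prop :=
  ∃ p : Polynomial ℂ, p ≠ 0 ∧ memE W (polyAct N W p a)

/-- Membership in `Ē₀(W)`. -/
def memE0 (a : ℤ → Module.End ℂ W) : Prop :=
  ∃ p : Polynomial ℂ, p ≠ 0 ∧ polyAct N W p a = 0

/-! ### Auxiliary lemmas -/

lemma shiftE_pow (j : ℕ) (a : ℤ → Module.End ℂ W) (k : ℤ) :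
    ((shiftE N W)^j) a k = a (k + j*N) := by
  induction j generalizing a k with
  | zero => simp
  | succ j ih =>
    rw [pow_succ, Module.End.mul_apply]
    show ((shiftE N W)^j) (shiftE N W a) k = _
    rw [ih (shiftE N W a) k]
    show a (k + j*N + N) = _
    congr 1; push_cast; ring

lemma polyAct_apply (p : Polynomial ℂ) (a : ℤ → Module.End ℂ W) (k : ℤ) :
    polyAct N W p a k = ∑ j ∈ Finset.range (p.natDegree+1), p.coeff j • a (k + j*N) := by
  rw [polyAct, Polynomial.aeval_eq_sum_range, LinearMap.sum_apply, Finset.sum_apply]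
  exact Finset.sum_congr rfl fun j _ => by
    rw [LinearMap.smul_apply, Pi.smul_apply, shiftE_pow]

lemma polyAct_mul (p q : Polynomial ℂ) (a : ℤ → Module.End ℂ W) :
    polyAct N W (p*q) a = polyAct N W p (polyAct N W q a) := by
  rw [polyAct, polyAct, polyAct, map_mul, Module.End.mul_apply]

lemma polyAct_shift (p : Polynomial ℂ) (a : ℤ → Module.End ℂ W) (c : ℤ) :
    polyAct N W p (fun m => a (c + m)) = fun k => polyAct N W p a (c + k) := by
  funext k
  rw [polyAct_apply, polyAct_apply]
  exact Finset.sum_congr rfl fun j _ => by congr 2; ring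

lemma polyAct_comm (p : Polynomial ℂ) (a : ℤ → Module.End ℂ W) (A : Module.End ℂ W) :
    polyAct N W p (fun m => A * a m - a m * A)
      = fun k => A * polyAct N W p a k - polyAct N W p a k * A := by
  funext k
  rw [polyAct_apply, polyAct_apply, Finset.mul_sum, Finset.sum_mul, ← Finset.sum_sub_distrib]
  exact Finset.sum_congr rfl fun j _ => by
    rw [smul_sub, mul_smul_comm, smul_mul_assoc]

lemma polyAct_comm_shift (p : Polynomial ℂ) (a : ℤ → Module.End ℂ W) (A : Module.End ℂ W)
    (c : ℤ) :
    polyAct N W p (fun m => A * a (c + m) - a (c + m) * A)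
      = fun k => A * polyAct N W p a (c + k) - polyAct N W p a (c + k) * A := by
  have h1 := polyAct_comm N W p (fun m => a (c + m)) A
  rw [polyAct_shift] at h1
  exact h1

lemma polyAct_smul_shift (p : Polynomial ℂ) (a : ℤ → Module.End ℂ W) (s : ℂ) (c : ℤ) :
    polyAct N W p (fun m => s • a (c + m)) = fun k => s • polyAct N W p a (c + k) := by
  funext k
  rw [polyAct_apply, polyAct_apply, Finset.smul_sum]
  exact Finset.sum_congr rfl fun j _ => by
    rw [smul_comm]; congr 2; ring

lemma polyAct_sub (p : Polynomial ℂ) (a b : ℤ → Module.End ℂ W) :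
    polyAct N W p (a - b) = polyAct N W p a - polyAct N W p b :=
  map_sub (Polynomial.aeval (shiftE N W) p) a b

lemma polyAct_add (p : Polynomial ℂ) (a b : ℤ → Module.End ℂ W) :
    polyAct N W p (a + b) = polyAct N W p a + polyAct N W p b :=
  map_add (Polynomial.aeval (shiftE N W) p) a b

lemma polyAct_zero (p : Polynomial ℂ) : polyAct N W p 0 = 0 :=
  map_zero (Polynomial.aeval (shiftE N W) p)

/-- A ℤ-indexed sequence satisfying a constant-coefficient linear recurrence (with step `N`)
which is eventually zero is identically zero. -/
lemma rec_ev_zero {V : Type*} [AddCommGroup V] [Module ℂ V] {N : ℕ} (hN : 0 < N)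
    (u : ℤ → V) (q : Polynomial ℂ) (hq : q ≠ 0)
    (hrec : ∀ k : ℤ, ∑ j ∈ Finset.range (q.natDegree+1), q.coeff j • u (k + j*N) = 0)
    (M : ℤ) (hev : ∀ k ≥ M, u k = 0) : ∀ k, u k = 0 := by
  set t := q.natTrailingDegree with ht
  have hct : q.coeff t ≠ 0 := by
    rwa [← Polynomial.trailingCoeff, Polynomial.trailingCoeff_nonzero_iff_nonzero]
  have htd : t ≤ q.natDegree := q.natTrailingDegree_le_natDegree
  have main : ∀ m : ℕ, ∀ k ≥ M - m, u k = 0 := by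
    intro m
    induction m with
    | zero => intro k hk; exact hev k (by omega)
    | succ m ih =>
      intro k hk
      have hsum := hrec (k - t*N)
      have hsingle : ∑ j ∈ Finset.range (q.natDegree+1), q.coeff j • u (k - t*N + j*N)
          = q.coeff t • u k := by
        rw [Finset.sum_eq_single t]
        · congr 1; ring
        · intro j hj hjt
          rcases lt_or_gt_of_ne hjt with h | h
          · rw [Polynomial.coeff_eq_zero_of_lt_natTrailingDegree h, zero_smul]
          · rw [ih (k - t*N + j*N) ?_, smul_zero]
            have h1 : (t:ℤ) + 1 ≤ (j:ℤ) := by exact_mod_cast h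
            have h2 : (t:ℤ)*N + N ≤ (j:ℤ)*N := by nlinarith [Int.natCast_pos.mpr hN]
            omega
        · intro h; exact absurd (Finset.mem_range.mpr (by omega)) h
      rw [hsingle] at hsum
      exact (smul_eq_zero.mp hsum).resolve_left hct
  intro k
  exact main (M - k).toNat k (by omega)

/-- `E(W) ∩ Ē₀(W) = 0`. -/
lemma eq_zero_of_memE_memE0 (hN : 0 < N) (u : ℤ → Module.End ℂ W)
    (hE : memE W u) (h0 : memE0 N W u) : u = 0 := by
  obtain ⟨q, hq, hq0⟩ := h0
  funext k
  ext w
  show u k w = 0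
  obtain ⟨M, hM⟩ := hE w
  refine rec_ev_zero hN (fun k => u k w) q hq (fun k' => ?_) M hM k
  have h := congrFun hq0 k'
  rw [polyAct_apply] at h
  have h2 : (∑ j ∈ Finset.range (q.natDegree+1), q.coeff j • u (k' + j*N)) w = 0 := by
    rw [h]; rfl
  rw [LinearMap.sum_apply] at h2
  simpa [LinearMap.smul_apply] using h2

/-- If `a, b ∈ Ē(W)`, `a` is supported in degrees `≡ i (mod N)`, and
`[a_k, b_l] = (c₀)_{k+l} + (k/N)(c₁)_{k+l−N}` for all `k ≡ i (mod N)` and all `l`, then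
`c₀, c₁ ∈ Ē(W)` and the same commutator identity holds for the projections
`ψ_R(a), ψ_R(b), ψ_R(c₀), ψ_R(c₁)` (each characterized as the unique element `e` of
`E(W)` whose difference with the given series lies in `Ē₀(W)`). -/
theorem statement15 (N : ℕ) (hN : 0 < N) (W : Type) [AddCommGroup W] [Module ℂ W]
    (i : ℤ) (a b c₀ c₁ : ℤ → Module.End ℂ W)
    (ha : memEbar N W a) (hb : memEbar N W b)
    (hsupp : ∀ k : ℤ, ¬ k % (N : ℤ) = i % (N : ℤ) → a k = 0)
    (hcomm : ∀ (k l : ℤ), k % (N : ℤ) = i % (N : ℤ) →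
      a k * b l - b l * a k = c₀ (k + l) + ((k : ℂ) / (N : ℂ)) • c₁ (k + l - N)) :
    (memEbar N W c₀ ∧ memEbar N W c₁) ∧
    (∀ ea eb e₀ e₁ : ℤ → Module.End ℂ W,
      memE W ea → memE0 N W (a - ea) →
      memE W eb → memE0 N W (b - eb) →
      memE W e₀ → memE0 N W (c₀ - e₀) →
      memE W e₁ → memE0 N W (c₁ - e₁) →
      ∀ (k l : ℤ), k % (N : ℤ) = i % (N : ℤ) →
        ea k * eb l - eb l * ea k = e₀ (k + l) + ((k : ℂ) / (N : ℂ)) • e₁ (k + l - N)) := by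
  have hNC : (N:ℂ) ≠ 0 := Nat.cast_ne_zero.mpr hN.ne'
  obtain ⟨pb, hpb, hpbE⟩ := hb
  have hk2 : ((i : ℤ) + N) % N = i % N := by
    conv_lhs => rw [show (i : ℤ) + N = i + N*1 by ring]
    exact Int.add_mul_emod_self_left ..
  -- closed formula for c₁
  have hc1 : ∀ m : ℤ,
      c₁ m = (a (i+N) * b (-i + m) - b (-i + m) * a (i+N))
        - (a i * b ((N - i) + m) - b ((N - i) + m) * a i) := by
    intro m
    have h1 := hcomm i ((N - i) + m) rfl
    have h2 := hcomm (i+N) (-i + m) hk2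
    rw [show i + ((N - i) + m) - N = m by ring, show i + ((N - i) + m) = m + N by ring] at h1
    rw [show (i+N) + (-i + m) - N = m by ring, show (i+N) + (-i + m) = m + N by ring] at h2
    push_cast at h2
    rw [show ((i:ℂ) + (N:ℂ))/(N:ℂ) = (i:ℂ)/N + 1 by field_simp] at h2
    rw [h1, h2, add_smul, one_smul]
    abel
  -- closed formula for c₀
  have hc0 : ∀ m : ℤ,
      c₀ m = (a i * b (-i + m) - b (-i + m) * a i)
        - ((i:ℂ)/N) • c₁ (-(N:ℤ) + m) := by
    intro m
    have h1 := hcomm i (-i + m) rfl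
    rw [show i + (-i + m) - N = -(N:ℤ) + m by ring, show i + (-i + m) = m by ring] at h1
    rw [h1]
    abel
  -- `polyAct pb c₁` expressed via `polyAct pb b`
  have hP1 : ∀ k : ℤ, polyAct N W pb c₁ k
      = (a (i+N) * polyAct N W pb b (-i + k) - polyAct N W pb b (-i + k) * a (i+N))
        - (a i * polyAct N W pb b ((N - i) + k) - polyAct N W pb b ((N - i) + k) * a i) := by
    intro k
    have : c₁ = (fun m => a (i+N) * b (-i + m) - b (-i + m) * a (i+N))
        - (fun m => a i * b ((N - i) + m) - b ((N - i) + m) * a i) := by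
      funext m; exact hc1 m
    rw [this, polyAct_sub, Pi.sub_apply, polyAct_comm_shift, polyAct_comm_shift]
  have hc₁E : memE W (polyAct N W pb c₁) := by
    intro w
    obtain ⟨M₁, h₁⟩ := hpbE w
    obtain ⟨M₂, h₂⟩ := hpbE (a (i+N) w)
    obtain ⟨M₃, h₃⟩ := hpbE (a i w)
    refine ⟨max (max (M₁ + i) (M₂ + i)) (max (M₁ - N + i) (M₃ - N + i)), fun k hk => ?_⟩
    rw [hP1 k]
    simp [LinearMap.sub_apply, Module.End.mul_apply,
      h₁ (-i + k) (by omega), h₁ ((N - i) + k) (by omega),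
      h₂ (-i + k) (by omega), h₃ ((N - i) + k) (by omega)]
  have hc₀E : memE W (polyAct N W pb c₀) := by
    have hP0 : ∀ k : ℤ, polyAct N W pb c₀ k
        = (a i * polyAct N W pb b (-i + k) - polyAct N W pb b (-i + k) * a i)
          - ((i:ℂ)/N) • polyAct N W pb c₁ (-(N:ℤ) + k) := by
      intro k
      have : c₀ = (fun m => a i * b (-i + m) - b (-i + m) * a i)
          - (fun m => ((i:ℂ)/N) • c₁ (-(N:ℤ) + m)) := by
        funext m; exact hc0 m
      rw [this, polyAct_sub, Pi.sub_apply, polyAct_comm_shift, polyAct_smul_shift]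
    intro w
    obtain ⟨M₁, h₁⟩ := hpbE w
    obtain ⟨M₃, h₃⟩ := hpbE (a i w)
    obtain ⟨M₄, h₄⟩ := hc₁E w
    refine ⟨max (max (M₁ + i) (M₃ + i)) (M₄ + N), fun k hk => ?_⟩
    rw [hP0 k]
    simp [LinearMap.sub_apply, Module.End.mul_apply, LinearMap.smul_apply,
      h₁ (-i + k) (by omega), h₃ (-i + k) (by omega), h₄ (-(N:ℤ) + k) (by omega)]
  refine ⟨⟨⟨pb, hpb, hc₀E⟩, ⟨pb, hpb, hc₁E⟩⟩, ?_⟩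
  -- Part 2
  intro ea eb e₀ e₁ heaE hea0 hebE heb0 he₀E he₀0 he₁E he₁0
  obtain ⟨pa, hpa, hpa0⟩ := hea0
  obtain ⟨pb0, hpb0, hpb00⟩ := heb0
  obtain ⟨p₀, hp₀, hp₀0⟩ := he₀0
  obtain ⟨p₁, hp₁, hp₁0⟩ := he₁0
  -- Stage 1
  have step1 : ∀ k : ℤ, k % (N:ℤ) = i % (N:ℤ) → ∀ l : ℤ,
      (ea k * eb l - eb l * ea k - e₀ (k + l) - ((k:ℂ)/(N:ℂ)) • e₁ (k + l - N))
        + ((a k - ea k) * eb l - eb l * (a k - ea k)) = 0 := by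
    intro k hk
    set s : ℂ := ((k:ℂ)/(N:ℂ)) with hs
    set F1 : ℤ → Module.End ℂ W := fun l =>
      (ea k * eb l - eb l * ea k - e₀ (k + l) - s • e₁ (k + l - N))
        + ((a k - ea k) * eb l - eb l * (a k - ea k)) with hF1
    suffices h : F1 = 0 by intro l; exact congrFun h l
    apply eq_zero_of_memE_memE0 N W hN
    · -- memE F1
      intro w
      obtain ⟨M₁, h₁⟩ := hebE w
      obtain ⟨M₂, h₂⟩ := hebE (ea k w)
      obtain ⟨M₃, h₃⟩ := hebE ((a k - ea k) w)
      obtain ⟨M₄, h₄⟩ := he₀E w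
      obtain ⟨M₅, h₅⟩ := he₁E w
      refine ⟨max (max M₁ M₂) (max M₃ (max (M₄ - k) (M₅ - k + N))), fun l hl => ?_⟩
      show ((ea k * eb l - eb l * ea k - e₀ (k + l) - s • e₁ (k + l - N))
        + ((a k - ea k) * eb l - eb l * (a k - ea k))) w = 0
      have z1 : eb l w = 0 := h₁ l (by omega)
      have z2 : eb l (ea k w) = 0 := h₂ l (by omega)
      have z6 : eb l (a k w) = 0 := by
        have h := h₃ l (by omega)
        rw [LinearMap.sub_apply, map_sub, z2, sub_zero] at h
        exact h
      simp [LinearMap.add_apply, LinearMap.sub_apply, Module.End.mul_apply,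
        LinearMap.smul_apply, z1, z2, z6,
        h₄ (k+l) (by omega), h₅ (k+l-N) (by omega)]
    · -- memE0 F1
      have hF1G : F1 = (fun l => (c₀ - e₀) (k + l))
          + (fun l => s • (c₁ - e₁) ((k - N) + l))
          - (fun l => a k * (b - eb) l - (b - eb) l * a k) := by
        funext l
        have hc := hcomm k l hk
        have hc' : c₀ (k + l) = a k * b l - b l * a k - s • c₁ (k + l - N) := by
          rw [hc, hs]; abel
        simp only [Pi.add_apply, Pi.sub_apply, hF1]
        rw [show (k - N) + l = k + l - N by ring, hc']
        simp only [mul_sub, sub_mul, smul_sub]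
        module
      refine ⟨p₀ * (p₁ * pb0), by simp [hp₀, hp₁, hpb0], ?_⟩
      rw [hF1G, polyAct_sub, polyAct_add]
      have z1 : polyAct N W (p₀ * (p₁ * pb0)) (fun l => (c₀ - e₀) (k + l)) = 0 := by
        rw [show p₀ * (p₁ * pb0) = (p₁ * pb0) * p₀ by ring, polyAct_mul, polyAct_shift,
          hp₀0]
        show polyAct N W (p₁ * pb0) (fun _ => 0) = 0
        rw [show (fun _ : ℤ => (0:Module.End ℂ W)) = (0 : ℤ → Module.End ℂ W) from rfl,
          polyAct_zero]
      have z2 : polyAct N W (p₀ * (p₁ * pb0))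
          (fun l => s • (c₁ - e₁) ((k - N) + l)) = 0 := by
        rw [show p₀ * (p₁ * pb0) = (p₀ * pb0) * p₁ by ring, polyAct_mul, polyAct_smul_shift,
          hp₁0]
        show polyAct N W (p₀ * pb0) (fun _ => s • (0:Module.End ℂ W)) = 0
        rw [show (fun _ : ℤ => s • (0:Module.End ℂ W)) = (0 : ℤ → Module.End ℂ W) from
          funext fun _ => smul_zero s, polyAct_zero]
      have z3 : polyAct N W (p₀ * (p₁ * pb0))
          (fun l => a k * (b - eb) l - (b - eb) l * a k) = 0 := by
        rw [show p₀ * (p₁ * pb0) = (p₀ * p₁) * pb0 by ring, polyAct_mul, polyAct_comm,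
          hpb00]
        show polyAct N W (p₀ * p₁) (fun _ => a k * (0:Module.End ℂ W) - 0 * a k) = 0
        rw [show (fun _ : ℤ => a k * (0:Module.End ℂ W) - 0 * a k)
            = (0 : ℤ → Module.End ℂ W) from funext fun _ => by simp, polyAct_zero]
      rw [z1, z2, z3]
      simp
  -- Stage 2
  have step2 : ∀ (l : ℤ) (w : W) (k : ℤ),
      ((a k - ea k) * eb l - eb l * (a k - ea k)) w = 0 := by
    intro l w
    obtain ⟨Ma1, hMa1⟩ := heaE w
    obtain ⟨Ma2, hMa2⟩ := heaE (eb l w)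
    obtain ⟨M₀, hM₀⟩ := he₀E w
    obtain ⟨M₁', hM₁'⟩ := he₁E w
    refine rec_ev_zero hN (fun k => ((a k - ea k) * eb l - eb l * (a k - ea k)) w)
      pa hpa (fun k => ?_) (max (max Ma1 Ma2) (max (M₀ - l) (M₁' - l + N)))
      (fun k hk => ?_)
    · -- recurrence
      have hS : (∑ j ∈ Finset.range (pa.natDegree+1),
          pa.coeff j • (a - ea) (k + j*N)) = 0 := by
        rw [← polyAct_apply, hpa0]; rfl
      have expand : ∀ j : ℕ, pa.coeff j • (((a (k + j*N) - ea (k + j*N)) * eb l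
            - eb l * (a (k + j*N) - ea (k + j*N))) w)
          = (pa.coeff j • (a - ea) (k + j*N)) (eb l w)
            - eb l ((pa.coeff j • (a - ea) (k + j*N)) w) := by
        intro j
        simp [LinearMap.sub_apply, Module.End.mul_apply, LinearMap.smul_apply,
          Pi.sub_apply, smul_sub, map_smul]
      calc ∑ j ∈ Finset.range (pa.natDegree+1),
            pa.coeff j • (((a (k + j*N) - ea (k + j*N)) * eb l
              - eb l * (a (k + j*N) - ea (k + j*N))) w)
          = (∑ j ∈ Finset.range (pa.natDegree+1),
              pa.coeff j • (a - ea) (k + j*N)) (eb l w)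
            - eb l ((∑ j ∈ Finset.range (pa.natDegree+1),
              pa.coeff j • (a - ea) (k + j*N)) w) := by
            rw [Finset.sum_congr rfl (fun j _ => expand j), Finset.sum_sub_distrib,
              LinearMap.sum_apply, ← map_sum, LinearMap.sum_apply]
        _ = 0 := by rw [hS]; simp
    · -- eventually zero
      by_cases hki : k % (N:ℤ) = i % (N:ℤ)
      · have h := step1 k hki l
        have h' : (a k - ea k) * eb l - eb l * (a k - ea k)
            = -(ea k * eb l - eb l * ea k - e₀ (k + l) - ((k:ℂ)/(N:ℂ)) • e₁ (k + l - N)) :=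
          eq_neg_of_add_eq_zero_right h
        show ((a k - ea k) * eb l - eb l * (a k - ea k)) w = 0
        rw [h']
        simp [LinearMap.neg_apply, LinearMap.sub_apply, Module.End.mul_apply,
          LinearMap.smul_apply, hMa1 k (by omega), hMa2 k (by omega),
          hM₀ (k+l) (by omega), hM₁' (k+l-N) (by omega)]
      · have ha0 : a k = 0 := hsupp k hki
        show ((a k - ea k) * eb l - eb l * (a k - ea k)) w = 0
        simp [ha0, LinearMap.sub_apply, Module.End.mul_apply,
          hMa1 k (by omega), hMa2 k (by omega)]
  -- conclusion
  intro k l hk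
  have h := step1 k hk l
  have hu : (a k - ea k) * eb l - eb l * (a k - ea k) = 0 := by
    ext w; exact step2 l w k
  rw [hu, add_zero, sub_sub, sub_eq_zero] at h
  exact h

end Twisted
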